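/- Let L be a code loop of rank n with basis B = {a₁, …, aₙ}, and for σ ⊆ {1,…,n} let a_σ be the left-normed product of the aᵢ with i ∈ σ taken in increasing order (a_∅ = 1), so that L = {a_σ, −a_σ : σ ⊆ {1,…,n}}. Let Ψ be a function from subsets of {1,…,n} to {1,−1} such that Ψ(∅) = 1, Ψ({j}) = 1 for every j, and Ψ(σ△μ) = Ψ(σ)·Ψ(μ) whenever a_σ·a_μ = a_μ·a_σ, where △ denotes symmetric difference. Then the map Ψ̂ : L → L defined by Ψ̂(a_σ) = Ψ(σ)·a_σ and Ψ̂(−a_σ) = −Ψ(σ)·a_σ is a half-automorphism of L fixing every element of B. -/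

import Mathlib

/-- A loop: a binary operation with two-sided identity in which left and right
translations are bijections (equivalently, equations `a·x = b` and `y·a = b`
have unique solutions). -/
structure LoopStr (α : Type*) where
  mul : α → α → α
  one : α
  one_mul : ∀ x, mul one x = x
  mul_one : ∀ x, mul x one = x
  mulLeft_bij : ∀ a, Function.Bijective (fun x => mul a x)
  mulRight_bij : ∀ a, Function.Bijective (fun x => mul x a)

namespace LoopStr

variable {α : Type*} (S : LoopStr α)

/-- A subset containing `1` and closed under multiplication and (left and right) inverses. -/
def IsClosed (T : Set α) : Prop :=
  S.one ∈ T ∧ (∀ x ∈ T, ∀ y ∈ T, S.mul x y ∈ T) ∧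
    (∀ x ∈ T, ∀ y, S.mul x y = S.one → y ∈ T) ∧
    (∀ x ∈ T, ∀ y, S.mul y x = S.one → y ∈ T)

/-- The subloop generated by a set: the smallest closed subset containing it. -/
def gen (X : Set α) : Set α := ⋂₀ {T | X ⊆ T ∧ S.IsClosed T}

def Generates (X : Set α) : Prop := S.gen X = Set.univ

/-- A basis: a minimal generating set. -/
def IsBasis (X : Set α) : Prop := S.Generates X ∧ ∀ Y ⊂ X, ¬ S.Generates Y

def IsHalfAut (f : α → α) : Prop :=
  Function.Bijective f ∧
    ∀ x y, f (S.mul x y) = S.mul (f x) (f y) ∨ f (S.mul x y) = S.mul (f y) (f x)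

def IsAut (f : α → α) : Prop :=
  Function.Bijective f ∧ ∀ x y, f (S.mul x y) = S.mul (f x) (f y)

def IsAntiAut (f : α → α) : Prop :=
  Function.Bijective f ∧ ∀ x y, f (S.mul x y) = S.mul (f y) (f x)

/-- The commutant of a loop. -/
def commutant : Set α := {c | ∀ x, S.mul c x = S.mul x c}

/-- The nucleus of a loop. -/
def nucleus : Set α :=
  {a | ∀ u v, S.mul (S.mul a u) v = S.mul a (S.mul u v) ∧
        S.mul (S.mul u a) v = S.mul u (S.mul a v) ∧
        S.mul (S.mul u v) a = S.mul u (S.mul v a)}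

end LoopStr

/-- A code loop: a finite Moufang loop with a unique nontrivial square `neg` (written `-1`),
which (by Chein–Goodaire) is central of order 2, and all squares, commutators and
associators lie in `{1, neg}`. -/
structure CodeLoop (α : Type*) extends LoopStr α where
  finite : Finite α
  moufang : ∀ x y z, mul (mul x (mul z x)) y = mul x (mul z (mul x y))
  neg : α
  neg_ne_one : neg ≠ one
  neg_is_square : ∃ x, mul x x = neg
  square_unique : ∀ m, m ≠ one → (∃ x, mul x x = m) → m = neg
  neg_mul_comm : ∀ x, mul neg x = mul x neg
  neg_mul_assoc₁ : ∀ x y, mul (mul neg x) y = mul neg (mul x y)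
  neg_mul_assoc₂ : ∀ x y, mul (mul x neg) y = mul x (mul neg y)
  neg_mul_assoc₃ : ∀ x y, mul (mul x y) neg = mul x (mul y neg)
  neg_neg : mul neg neg = one
  square_mem : ∀ x, mul x x = one ∨ mul x x = neg
  comm_mem : ∀ x y, mul x y = mul y x ∨ mul x y = mul (mul y x) neg
  assoc_mem : ∀ x y z, mul (mul x y) z = mul x (mul y z) ∨
      mul (mul x y) z = mul (mul x (mul y z)) neg

/-- The left-normed product `a_σ` of the basis elements indexed by `σ`, in increasing order. -/
def aSig {α : Type*} (S : LoopStr α) {n : ℕ} (a : Fin n → α) (σ : Finset (Fin n)) : α :=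
  ((σ.sort (· ≤ ·)).map a).foldl S.mul S.one


namespace CLAux

variable {α : Type*} {C : CodeLoop α}

lemma nn (x : α) : C.mul C.neg (C.mul C.neg x) = x := by
  rw [← C.neg_mul_assoc₁, C.neg_neg, C.one_mul]

lemma mul_neg_right (x y : α) : C.mul x (C.mul C.neg y) = C.mul C.neg (C.mul x y) := by
  rw [C.neg_mul_comm y, ← C.neg_mul_assoc₃, C.neg_mul_comm]

/-- the sign relation -/
def R (C : CodeLoop α) (x y : α) : Prop := y = x ∨ y = C.mul C.neg x

lemma R.refl {x : α} : R C x x := Or.inl (Eq.refl x)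

lemma R.symm {x y : α} (h : R C x y) : R C y x := by
  rcases h with h | h
  · exact Or.inl h.symm
  · right; rw [h, nn]

lemma R.trans {x y z : α} (h : R C x y) (h' : R C y z) : R C x z := by
  rcases h with h | h <;> rcases h' with h' | h' <;> subst h h'
  · exact R.refl
  · exact Or.inr (Eq.refl _)
  · exact Or.inr (Eq.refl _)
  · exact Or.inl (nn x)

lemma R.mul {x x' y y' : α} (h : R C x x') (h' : R C y y') :
    R C (C.mul x y) (C.mul x' y') := by
  rcases h with h | h <;> rcases h' with h' | h' <;> subst h h'
  · exact R.refl
  · exact Or.inr (mul_neg_right _ _)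
  · exact Or.inr (C.neg_mul_assoc₁ _ _)
  · left; rw [C.neg_mul_assoc₁, mul_neg_right, nn]

def sd (C : CodeLoop α) : Setoid α := ⟨R C, ⟨fun _ => R.refl, R.symm, R.trans⟩⟩

def Q (C : CodeLoop α) := Quotient (sd C)

def qm (C : CodeLoop α) (x : α) : Q C := Quotient.mk (sd C) x

instance : CommMonoid (Q C) where
  mul := Quotient.map₂ C.mul (fun _ _ h _ _ h' => R.mul h h')
  one := qm C C.one
  mul_assoc a b c := by
    induction a using Quotient.inductionOn
    induction b using Quotient.inductionOn
    induction c using Quotient.inductionOn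
    refine Quotient.sound (R.symm ?_)
    rename_i x y z
    rcases C.assoc_mem x y z with h | h
    · exact Or.inl h
    · right; rw [h, C.neg_mul_comm]
  one_mul a := by
    induction a using Quotient.inductionOn
    exact congrArg (qm C) (C.one_mul _)
  mul_one a := by
    induction a using Quotient.inductionOn
    exact congrArg (qm C) (C.mul_one _)
  mul_comm a b := by
    induction a using Quotient.inductionOn
    induction b using Quotient.inductionOn
    refine Quotient.sound ?_
    rename_i x y
    rcases C.comm_mem y x with h | h
    · exact Or.inl h
    · right; rw [h, C.neg_mul_comm]

lemma qm_mul (x y : α) : qm C (C.mul x y) = qm C x * qm C y := rfl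

lemma qm_one : (1 : Q C) = qm C C.one := rfl

lemma sq_one (x : α) : qm C x * qm C x = 1 := by
  refine Quotient.sound ?_
  rcases C.square_mem x with h | h
  · exact Or.inl h.symm
  · right; rw [h]; exact (C.neg_neg).symm

lemma foldl_q (l : List α) (x : α) :
    qm C (l.foldl C.mul x) = qm C x * (l.map (qm C)).prod := by
  induction l generalizing x with
  | nil => simp
  | cons b t ih =>
    rw [List.foldl_cons, ih, List.map_cons, List.prod_cons, qm_mul, mul_assoc]

lemma qm_aSig {n : ℕ} (a : Fin n → α) (σ : Finset (Fin n)) :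
    qm C (aSig C.toLoopStr a σ) = ∏ i ∈ σ, qm C (a i) := by
  rw [aSig, foldl_q, ← qm_one, one_mul, List.map_map]
  have hp := (Finset.sort_perm_toList (r := (· ≤ ·)) (s := σ)).map (qm C ∘ a)
  rw [hp.prod_eq, Finset.prod_eq_multiset_prod, ← Multiset.coe_toList σ.val,
    Multiset.map_coe, Multiset.prod_coe]
  rfl

end CLAux
namespace CLAux
variable {α : Type*} {C : CodeLoop α}

lemma qm_exact {x y : α} (h : qm C x = qm C y) : R C x y := Quotient.exact h

lemma prod_symmDiff {M β : Type*} [CommMonoid M] [DecidableEq β] (f : β → M)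
    (hf : ∀ i, f i * f i = 1) (σ μ : Finset β) :
    (∏ i ∈ σ, f i) * ∏ i ∈ μ, f i = ∏ i ∈ symmDiff σ μ, f i := by
  have h1 : (∏ i ∈ σ, f i) = (∏ i ∈ σ \ μ, f i) * ∏ i ∈ σ ∩ μ, f i := by
    rw [← Finset.sdiff_inter_self_left σ μ]
    exact (Finset.prod_sdiff Finset.inter_subset_left).symm
  have h2 : (∏ i ∈ μ, f i) = (∏ i ∈ μ \ σ, f i) * ∏ i ∈ σ ∩ μ, f i := by
    rw [← Finset.sdiff_inter_self_right μ σ]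
    exact (Finset.prod_sdiff Finset.inter_subset_right).symm
  rw [h1, h2, mul_mul_mul_comm, ← Finset.prod_union (disjoint_sdiff_sdiff),
    ← Finset.prod_mul_distrib]
  simp [hf, symmDiff_def]

def IsSgn (C : CodeLoop α) (p : α) : Prop := p = C.one ∨ p = C.neg

lemma sgn_one : IsSgn C C.one := Or.inl rfl
lemma sgn_neg : IsSgn C C.neg := Or.inr rfl

lemma sgn_left {p : α} (hp : IsSgn C p) (u v : α) :
    C.mul (C.mul p u) v = C.mul p (C.mul u v) := by
  rcases hp with h | h <;> subst h
  · rw [C.one_mul, C.one_mul]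
  · exact C.neg_mul_assoc₁ u v

lemma sgn_mid {p : α} (hp : IsSgn C p) (u v : α) :
    C.mul (C.mul u p) v = C.mul u (C.mul p v) := by
  rcases hp with h | h <;> subst h
  · rw [C.mul_one, C.one_mul]
  · exact C.neg_mul_assoc₂ u v

lemma sgn_comm {p : α} (hp : IsSgn C p) (u : α) : C.mul p u = C.mul u p := by
  rcases hp with h | h <;> subst h
  · rw [C.one_mul, C.mul_one]
  · exact C.neg_mul_comm u

lemma sgn_mul {p q : α} (hp : IsSgn C p) (hq : IsSgn C q) : IsSgn C (C.mul p q) := by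
  rcases hp with h | h <;> rcases hq with h' | h' <;> subst h h'
  · exact Or.inl (C.one_mul _)
  · exact Or.inr (C.one_mul _)
  · exact Or.inr (C.mul_one _)
  · exact Or.inl C.neg_neg

lemma sgn_swap {q : α} (hq : IsSgn C q) (u v : α) :
    C.mul u (C.mul q v) = C.mul q (C.mul u v) := by
  rw [← sgn_mid hq, ← sgn_comm hq u, sgn_left hq]

lemma sgn_prod {p q : α} (hp : IsSgn C p) (hq : IsSgn C q) (u v : α) :
    C.mul (C.mul p u) (C.mul q v) = C.mul (C.mul p q) (C.mul u v) := by
  rw [sgn_left hp, sgn_swap hq, sgn_left hp]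

lemma key {n : ℕ} (a : Fin n → α) (σ μ : Finset (Fin n)) :
    ∃ s, IsSgn C s ∧ C.mul (aSig C.toLoopStr a σ) (aSig C.toLoopStr a μ)
      = C.mul s (aSig C.toLoopStr a (symmDiff σ μ)) := by
  have hq : qm C (C.mul (aSig C.toLoopStr a σ) (aSig C.toLoopStr a μ))
      = qm C (aSig C.toLoopStr a (symmDiff σ μ)) := by
    rw [qm_mul, qm_aSig, qm_aSig, qm_aSig]
    exact prod_symmDiff _ (fun i => sq_one (a i)) σ μ
  rcases qm_exact hq with h | h
  · exact ⟨C.one, sgn_one, by rw [C.one_mul, h]⟩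
  · refine ⟨C.neg, sgn_neg, ?_⟩
    rw [← nn (C.mul (aSig C.toLoopStr a σ) (aSig C.toLoopStr a μ)), ← h]

end CLAux

/-- A function `Ψ : P_n → {1, -1}` with `Ψ(∅) = Ψ({j}) = 1` and
`Ψ(σ Δ μ) = Ψ(σ)·Ψ(μ)` whenever `a_σ` and `a_μ` commute induces a half-automorphism
`Ψ̂` of the code loop fixing every basis element. -/
theorem stmt4 {α : Type*} (C : CodeLoop α) {n : ℕ} (a : Fin n → α)
    (hinj : Function.Injective a) (hbasis : C.toLoopStr.IsBasis (Set.range a))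
    (hcover : ∀ x : α, ∃ σ : Finset (Fin n),
        x = aSig C.toLoopStr a σ ∨ x = C.mul C.neg (aSig C.toLoopStr a σ))
    (Ψ : Finset (Fin n) → α)
    (hΨval : ∀ σ, Ψ σ = C.one ∨ Ψ σ = C.neg)
    (hΨempty : Ψ ∅ = C.one)
    (hΨsingle : ∀ j, Ψ {j} = C.one)
    (hΨmul : ∀ σ μ : Finset (Fin n),
        C.mul (aSig C.toLoopStr a σ) (aSig C.toLoopStr a μ) =
          C.mul (aSig C.toLoopStr a μ) (aSig C.toLoopStr a σ) →
        Ψ (symmDiff σ μ) = C.mul (Ψ σ) (Ψ μ))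
    (F : α → α)
    (hF1 : ∀ σ, F (aSig C.toLoopStr a σ) = C.mul (Ψ σ) (aSig C.toLoopStr a σ))
    (hF2 : ∀ σ, F (C.mul C.neg (aSig C.toLoopStr a σ))
        = C.mul C.neg (C.mul (Ψ σ) (aSig C.toLoopStr a σ))) :
    C.toLoopStr.IsHalfAut F ∧ ∀ i, F (a i) = a i := by

  classical
  open CLAux in
  -- abbreviations
  have sign_eq : ∀ x (σ : Finset (Fin n)),
      (x = aSig C.toLoopStr a σ ∨ x = C.mul C.neg (aSig C.toLoopStr a σ)) →
      F x = C.mul (Ψ σ) x := by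
    intro x σ h
    rcases h with h | h <;> subst h
    · exact hF1 σ
    · rw [hF2 σ, sgn_swap (hΨval σ)]
  have repr : ∀ x : α, ∃ (σ : Finset (Fin n)) (e : α), IsSgn C e ∧
      x = C.mul e (aSig C.toLoopStr a σ) ∧ F x = C.mul (Ψ σ) x := by
    intro x
    obtain ⟨σ, h⟩ := hcover x
    refine ⟨σ, ?_⟩
    rcases h with h | h
    · exact ⟨C.one, sgn_one, by rw [C.one_mul, h], sign_eq x σ (Or.inl h)⟩
    · exact ⟨C.neg, sgn_neg, h, sign_eq x σ (Or.inr h)⟩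
  have hinv : Function.Involutive F := by
    intro x
    obtain ⟨σ, e, he, hxe, hx'⟩ := repr x
    rw [hx']
    rcases hΨval σ with h | h
    · rw [h, C.one_mul, hx', h, C.one_mul]
    · rw [h]
      rcases he with he | he <;> rw [he] at hxe
    -- e = one
      · rw [C.one_mul] at hxe
        rw [hxe, hF2 σ, h, CLAux.nn]
      · rw [hxe, CLAux.nn, hF1 σ, h]
  constructor
  · constructor
    · exact hinv.bijective
    · intro x y
      obtain ⟨σ, e₁, he₁, hxe, hx'⟩ := repr x
      obtain ⟨μ, e₂, he₂, hye, hy'⟩ := repr y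
      obtain ⟨s, hs, hprod⟩ := CLAux.key (C := C) a σ μ
      have hE : IsSgn C (C.mul e₁ e₂) := sgn_mul he₁ he₂
      have hxy : C.mul x y = C.mul (C.mul (C.mul e₁ e₂) s)
          (aSig C.toLoopStr a (symmDiff σ μ)) := by
        rw [hxe, hye, sgn_prod he₁ he₂, hprod, ← sgn_left hE]
      have hFxy : F (C.mul x y) = C.mul (Ψ (symmDiff σ μ)) (C.mul x y) := by
        refine sign_eq _ (symmDiff σ μ) ?_
        rcases sgn_mul hE hs with h | h <;> rw [h] at hxy
        · exact Or.inl (by rw [hxy, C.one_mul])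
        · exact Or.inr hxy
      rcases C.comm_mem x y with hc | hc
      · -- commuting case
        left
        have hcomm : C.mul (aSig C.toLoopStr a σ) (aSig C.toLoopStr a μ)
            = C.mul (aSig C.toLoopStr a μ) (aSig C.toLoopStr a σ) := by
          have h2 : C.mul (C.mul e₁ e₂) (C.mul (aSig C.toLoopStr a σ) (aSig C.toLoopStr a μ))
              = C.mul (C.mul e₁ e₂) (C.mul (aSig C.toLoopStr a μ) (aSig C.toLoopStr a σ)) := by
            rw [← sgn_prod he₁ he₂, ← hxe, ← hye, hc, hye, hxe,
              sgn_prod he₂ he₁, sgn_comm he₂ e₁]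
          exact (C.mulLeft_bij (C.mul e₁ e₂)).injective h2
        rw [hFxy, hx', hy', sgn_prod (hΨval σ) (hΨval μ), ← hΨmul σ μ hcomm]
      · -- anti-commuting case
        have hyx : C.mul y x = C.mul C.neg (C.mul x y) := by
          have : C.mul x y = C.mul C.neg (C.mul y x) := by
            rw [hc, ← sgn_comm sgn_neg]
          rw [this, CLAux.nn]
        have hfxfy : C.mul (F x) (F y)
            = C.mul (C.mul (Ψ σ) (Ψ μ)) (C.mul x y) := by
          rw [hx', hy', sgn_prod (hΨval σ) (hΨval μ)]
        have hfyfx : C.mul (F y) (F x)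
            = C.mul (C.mul (C.mul (Ψ μ) (Ψ σ)) C.neg) (C.mul x y) := by
          rw [hy', hx', sgn_prod (hΨval μ) (hΨval σ), hyx]
          exact (sgn_mid sgn_neg _ _).symm
        rw [hFxy, hfxfy, hfyfx]
        rcases hΨval (symmDiff σ μ) with hP | hP <;>
          rcases hΨval σ with h1 | h1 <;> rcases hΨval μ with h2 | h2 <;>
          rw [hP, h1, h2] <;>
          simp only [C.one_mul, C.mul_one, C.neg_neg] <;> tauto
  · intro i
    have hsig : aSig C.toLoopStr a {i} = a i := by
      rw [aSig, Finset.sort_singleton, List.map_cons, List.map_nil,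
        List.foldl_cons, List.foldl_nil, C.one_mul]
    conv_lhs => rw [← hsig]
    rw [hF1, hΨsingle, C.one_mul, hsig]
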